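/- Let ν be a probability mass function on 𝒳 with full support, let L be a strongly universal prefix code, and let 0 < λ < D(μ1‖ν). For α ∈ (0,1), define N(α) = inf{ n ≥ 1 : −L(X_1^n) − log ν(X_1^n) − nλ ≥ −log α }. If X_1, X_2, … are i.i.d. with distribution μ1, then the test terminates with probability one: μ1(N(α) < ∞) = 1. -/

import Mathlib

open MeasureTheory Filter
open scoped ENNReal NNReal Topology BigOperators Classical

namespace ChangeDetect

variable {𝒳 : Type} [Fintype 𝒳] [Nonempty 𝒳] [MeasurableSpace 𝒳]

/-- A probability mass function on `𝒳`. -/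
def IsPMF (p : 𝒳 → ℝ) : Prop := (∀ a, 0 ≤ p a) ∧ ∑ a, p a = 1

/-- A probability mass function on `𝒳` with full support. -/
def IsPosPMF (p : 𝒳 → ℝ) : Prop := (∀ a, 0 < p a) ∧ ∑ a, p a = 1

/-- `L` is a family of length functions of fixed-to-variable prefix codes,
i.e. it satisfies Kraft's inequality for each block length `n`. -/
def Kraft (L : (n : ℕ) → (Fin n → 𝒳) → ℕ) : Prop :=
  ∀ n : ℕ, ∑ w : Fin n → 𝒳, (2 : ℝ) ^ (-(L n w : ℝ)) ≤ 1

/-- i.i.d. (memoryless) probability of a word. -/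
noncomputable def wp (p : 𝒳 → ℝ) {n : ℕ} (w : Fin n → 𝒳) : ℝ := ∏ i, p (w i)

/-- Strong universality of the code `L`:
`R_L^n = sup_μ max_w (L(w) + log₂ μ(w)) = o(n)`, the sup over memoryless sources. -/
def StronglyUniversal (L : (n : ℕ) → (Fin n → 𝒳) → ℕ) : Prop :=
  ∃ R : ℕ → ℝ, Tendsto (fun n => R n / n) atTop (𝓝 0) ∧
    ∀ (n : ℕ) (μ : 𝒳 → ℝ), IsPosPMF μ → ∀ w : Fin n → 𝒳,
      (L n w : ℝ) + Real.logb 2 (wp μ w) ≤ R n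

/-- Kullback–Leibler divergence in bits between two pmfs on `𝒳`. -/
noncomputable def D (p q : 𝒳 → ℝ) : ℝ := ∑ a, p a * Real.logb 2 (p a / q a)

/-- The word `x_{s+1}, …, x_{s+n}` of the sequence `x`. -/
def seg (x : ℕ → 𝒳) (s n : ℕ) : Fin n → 𝒳 := fun i => x (s + (i : ℕ))

/-- `P` is the joint law of a sequence of independent observations with `X_{i+1} ∼ ps i`
(characterized by its values on cylinder sets). -/
def IsProductLaw (ps : ℕ → 𝒳 → ℝ) (P : Measure (ℕ → 𝒳)) : Prop :=
  IsProbabilityMeasure P ∧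
    ∀ (n : ℕ) (w : Fin n → 𝒳),
      P {x | ∀ i : Fin n, x (i : ℕ) = w i} = ∏ i : Fin n, ENNReal.ofReal (ps (i : ℕ) (w i))

/-- `P` is the law of an i.i.d. sequence with marginal pmf `p`. -/
def IsIIDLaw (p : 𝒳 → ℝ) (P : Measure (ℕ → 𝒳)) : Prop := IsProductLaw (fun _ => p) P

/-- The one-sided test statistic `−L(x_{s+1}^{s+n}) − log₂ ν(x_{s+1}^{s+n}) − nλ`. -/
noncomputable def stat (L : (n : ℕ) → (Fin n → 𝒳) → ℕ) (ν : 𝒳 → ℝ) (lam : ℝ)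
    (s : ℕ) (x : ℕ → 𝒳) (n : ℕ) : ℝ :=
  -(L n (seg x s n) : ℝ) - Real.logb 2 (wp ν (seg x s n)) - n * lam

/-- The auxiliary stopping time
`N(α) = inf {n ≥ 1 : −L(x_{s+1}^{s+n}) − log₂ ν(x_{s+1}^{s+n}) − nλ ≥ −log₂ α}`
(`⊤` if the set is empty). -/
noncomputable def Naux (L : (n : ℕ) → (Fin n → 𝒳) → ℕ) (ν : 𝒳 → ℝ) (lam α : ℝ)
    (s : ℕ) (x : ℕ → 𝒳) : ℕ∞ :=
  sInf {m : ℕ∞ | ∃ n : ℕ, m = n ∧ 1 ≤ n ∧ -Real.logb 2 α ≤ stat L ν lam s x n}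

/-- The CUSUM statistic `−L(x_{s+k+1}^{s+n}) − log₂ ν(x_{s+k+1}^{s+n}) − nλ`
(here `0 ≤ k < n`, corresponding to the 1-indexed segment `x_{k+1}^{n}` after `s`
training samples). -/
noncomputable def cstat (L : (n : ℕ) → (Fin n → 𝒳) → ℕ) (ν : 𝒳 → ℝ) (lam : ℝ)
    (s : ℕ) (x : ℕ → 𝒳) (k n : ℕ) : ℝ :=
  -(L (n - k) (seg x (s + k) (n - k)) : ℝ)
    - Real.logb 2 (wp ν (seg x (s + k) (n - k))) - n * lam

/-- The CUSUM stopping time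
`M(γ) = inf {n ≥ 1 : max_{1 ≤ k ≤ n} (−L(x_k^n) − log₂ ν(x_k^n) − nλ) ≥ log₂ γ}`. -/
noncomputable def Mstop (L : (n : ℕ) → (Fin n → 𝒳) → ℕ) (ν : 𝒳 → ℝ) (lam γ : ℝ)
    (s : ℕ) (x : ℕ → 𝒳) : ℕ∞ :=
  sInf {m : ℕ∞ | ∃ n : ℕ, m = n ∧ 1 ≤ n ∧ ∃ k < n, Real.logb 2 γ ≤ cstat L ν lam s x k n}

/-- Expectation of an (extended) stopping time. -/
noncomputable def lexp (P : Measure (ℕ → 𝒳)) (N : (ℕ → 𝒳) → ℕ∞) : ℝ≥0∞ :=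
  ∫⁻ x, (N x : ℝ≥0∞) ∂P

/-- The σ-algebra generated by the first `m` coordinates. -/
def firstCoords (𝒳 : Type) [MeasurableSpace 𝒳] (m : ℕ) : MeasurableSpace (ℕ → 𝒳) :=
  MeasurableSpace.comap (fun x => (fun i : Fin m => x (i : ℕ))) inferInstance

/-- An (extended) stopping variable of the observation sequence. -/
def IsSeqStoppingTime (N : (ℕ → 𝒳) → ℕ∞) : Prop :=
  ∀ n : ℕ, MeasurableSet[firstCoords 𝒳 n] {x | N x ≤ (n : ℕ∞)}

/-- Lorden's worst-case expected delay
`Ē₁(N) = sup_{m ≥ 1} ess sup E_m[(N − m + 1)⁺ | X_1, …, X_{m−1}]`,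
where under `P_m` the first `m − 1` observations are i.i.d. with the pre-change law
(the full i.i.d. pre-change law is `P0`) and the observations from time `m` on are
i.i.d. with the post-change law (full i.i.d. law `P1`).  The conditional expectation
given `X_1, …, X_{m−1}` is realized by integrating out the coordinates from `m` on. -/
noncomputable def lordenE1 (P0 P1 : Measure (ℕ → 𝒳)) (N : (ℕ → 𝒳) → ℕ∞) : ℝ≥0∞ :=
  ⨆ m : ℕ, essSup
    (fun x => ∫⁻ y, ((N (fun i => if i < m then x i else y i) : ℝ≥0∞) - m) ∂P1) P0

/-- Empirical distribution of the first `n0` samples of the sequence `x`. -/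
noncomputable def emp (n0 : ℕ) (x : ℕ → 𝒳) (a : 𝒳) : ℝ :=
  ((Finset.range n0).filter (fun i => x i = a)).card / n0

/-- The optimal worst-case delay over all stopping times with `E₀(S) ≥ γ`
(Lorden's class `S_γ`). -/
noncomputable def minDelay (P0 P1 : Measure (ℕ → 𝒳)) (γ : ℝ) : ℝ≥0∞ :=
  sInf {r : ℝ≥0∞ | ∃ N : (ℕ → 𝒳) → ℕ∞, IsSeqStoppingTime N ∧
    ENNReal.ofReal γ ≤ lexp P0 N ∧ r = lordenE1 P0 P1 N}



/-- Existence of a Chernoff exponent. -/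
lemma exists_chernoff {ι : Type} [Fintype ι] (p c : ι → ℝ) (hsum : ∑ a, p a = 1)
    (hc : 0 < ∑ a, p a * c a) :
    ∃ t : ℝ, 0 < t ∧ ∑ a, p a * Real.exp (-(t * c a)) < 1 := by
  set ψ : ℝ → ℝ := fun t => ∑ a, p a * Real.exp (-(t * c a)) with hψ
  have hψ0 : ψ 0 = 1 := by simp [hψ, hsum]
  have hd : HasDerivAt ψ (-(∑ a, p a * c a)) 0 := by
    have h1 : HasDerivAt ψ (∑ a, p a * (Real.exp (-(0 * c a)) * (-(c a)))) 0 := by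
      apply HasDerivAt.fun_sum
      intro a _
      have h2 : HasDerivAt (fun t : ℝ => -(t * c a)) (-(c a)) 0 := by
        have h3 : HasDerivAt (fun y : ℝ => -(y * c a)) (-(1 * c a)) 0 :=
          ((hasDerivAt_id (0:ℝ)).mul_const (c a)).neg
        rwa [one_mul] at h3
      exact (h2.exp).const_mul (p a)
    convert h1 using 1
    simp [mul_comm, mul_neg, Finset.sum_neg_distrib]
  have hslope : Tendsto (slope ψ 0) (𝓝[≠] (0:ℝ)) (𝓝 (-(∑ a, p a * c a))) :=
    hasDerivAt_iff_tendsto_slope.mp hd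
  have hev : ∀ᶠ u in 𝓝[≠] (0:ℝ), slope ψ 0 u < 0 :=
    hslope.eventually_lt_const (by linarith)
  have hev2 : ∀ᶠ u in 𝓝[>] (0:ℝ), slope ψ 0 u < 0 :=
    hev.filter_mono (nhdsWithin_mono _ (fun u hu => ne_of_gt hu))
  have hmem : ∀ᶠ u in 𝓝[>] (0:ℝ), 0 < u := eventually_mem_nhdsWithin
  obtain ⟨t, hts, htpos⟩ := (hev2.and hmem).exists
  refine ⟨t, htpos, ?_⟩
  rw [slope_def_field] at hts
  have : (ψ t - ψ 0) / (t - 0) < 0 := hts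
  rw [hψ0, sub_zero] at this
  have h3 : ψ t - 1 < 0 := by
    rcases div_neg_iff.mp this with ⟨_, h⟩ | ⟨h, _⟩
    · linarith
    · exact h
  linarith

/-- Chernoff sum bound over bad words. -/
lemma chernoff_sum_le {𝒳 : Type} [Fintype 𝒳] (p z : 𝒳 → ℝ) (hp : ∀ a, 0 ≤ p a)
    (t lam' : ℝ) (ht : 0 < t) (n : ℕ) :
    ∑ w ∈ Finset.univ.filter (fun w : Fin n → 𝒳 => ∑ i, z (w i) ≤ n * lam'),
        (∏ i, p (w i)) ≤ (∑ a, p a * Real.exp (-(t * (z a - lam')))) ^ n := by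
  have hnn : ∀ w : Fin n → 𝒳, 0 ≤ ∏ i, (p (w i) * Real.exp (-(t * (z (w i) - lam')))) :=
    fun w => Finset.prod_nonneg fun i _ => mul_nonneg (hp _) (Real.exp_nonneg _)
  calc ∑ w ∈ Finset.univ.filter (fun w : Fin n → 𝒳 => ∑ i, z (w i) ≤ n * lam'),
        (∏ i, p (w i))
      ≤ ∑ w ∈ Finset.univ.filter (fun w : Fin n → 𝒳 => ∑ i, z (w i) ≤ n * lam'),
        (∏ i, (p (w i) * Real.exp (-(t * (z (w i) - lam'))))) := by
        apply Finset.sum_le_sum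
        intro w hw
        have hbad : ∑ i, z (w i) ≤ n * lam' := (Finset.mem_filter.mp hw).2
        rw [Finset.prod_mul_distrib, ← Real.exp_sum]
        have hS : 0 ≤ ∑ i, -(t * (z (w i) - lam')) := by
          have h1 : ∑ i : Fin n, (z (w i) - lam') ≤ 0 := by
            rw [Finset.sum_sub_distrib]
            simp only [Finset.sum_const, Finset.card_univ, Fintype.card_fin, nsmul_eq_mul]
            linarith
          have h2 : ∑ i : Fin n, -(t * (z (w i) - lam'))
              = -(t * ∑ i : Fin n, (z (w i) - lam')) := by
            rw [Finset.mul_sum, Finset.sum_neg_distrib]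
          rw [h2]
          nlinarith
        have hexp := Real.one_le_exp hS
        have hpnn : 0 ≤ ∏ i, p (w i) := Finset.prod_nonneg fun i _ => hp _
        nlinarith
    _ ≤ ∑ w : Fin n → 𝒳, (∏ i, (p (w i) * Real.exp (-(t * (z (w i) - lam'))))) :=
        Finset.sum_le_sum_of_subset_of_nonneg (Finset.filter_subset _ _)
          (fun w _ _ => hnn w)
    _ = (∑ a, p a * Real.exp (-(t * (z a - lam')))) ^ n :=
        (Fintype.sum_pow (fun a => p a * Real.exp (-(t * (z a - lam')))) n).symm


/-- under the post-change source `μ1`, if `0 < λ < D(μ1‖ν)` then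
the test terminates with probability one: `μ1(N(α) < ∞) = 1`. -/
theorem stmt6 {𝒳 : Type} [Fintype 𝒳] [Nonempty 𝒳] [MeasurableSpace 𝒳]
    (μ1 ν : 𝒳 → ℝ) (hμ1 : IsPosPMF μ1) (hν : IsPosPMF ν)
    (L : (n : ℕ) → (Fin n → 𝒳) → ℕ) (hL : Kraft L) (hU : StronglyUniversal L)
    (lam : ℝ) (hlam0 : 0 < lam) (hlam1 : lam < D μ1 ν)
    (α : ℝ) (hα : α ∈ Set.Ioo (0 : ℝ) 1)
    (P1 : Measure (ℕ → 𝒳)) (hP1 : IsIIDLaw μ1 P1) :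
    P1 {x | Naux L ν lam α 0 x < ⊤} = 1 := by
  classical
  obtain ⟨hprob, hcyl⟩ := hP1
  haveI := hprob
  obtain ⟨hμpos, hμsum⟩ := hμ1
  obtain ⟨hνpos, hνsum⟩ := hν
  obtain ⟨R, hRo, hRu⟩ := hU
  set z : 𝒳 → ℝ := fun a => Real.logb 2 (μ1 a / ν a) with hz
  have hDz : D μ1 ν = ∑ a, μ1 a * z a := rfl
  set Dv := D μ1 ν with hDv
  set lam' := (lam + Dv) / 2 with hlam'
  have hlam'1 : lam < lam' := by rw [hlam']; linarith
  have hlam'2 : lam' < Dv := by rw [hlam']; linarith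
  have hcpos : 0 < ∑ a, μ1 a * (z a - lam') := by
    have heq : ∑ a, μ1 a * (z a - lam') = (∑ a, μ1 a * z a) - lam' := by
      simp only [mul_sub, Finset.sum_sub_distrib, ← Finset.sum_mul, hμsum, one_mul]
    rw [heq, ← hDz]
    linarith
  obtain ⟨t, htpos, hψlt⟩ := exists_chernoff μ1 (fun a => z a - lam') hμsum hcpos
  set ψ := ∑ a, μ1 a * Real.exp (-(t * (z a - lam'))) with hψdef
  have hψ0 : 0 ≤ ψ :=
    Finset.sum_nonneg fun a _ => mul_nonneg (hμpos a).le (Real.exp_nonneg _)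
  set A := {x : ℕ → 𝒳 | Naux L ν lam α 0 x = ⊤} with hA
  set c : ℝ := -Real.logb 2 α with hc
  have key : ∀ n : ℕ, 1 ≤ n → c + R n + n * lam ≤ n * lam' →
      P1 A ≤ ENNReal.ofReal (ψ ^ n) := by
    intro n hn hineq
    set Bad : Finset (Fin n → 𝒳) :=
      Finset.univ.filter (fun w : Fin n → 𝒳 => ∑ i, z (w i) ≤ n * lam') with hBad
    have hsub : A ⊆ ⋃ w ∈ Bad, {x : ℕ → 𝒳 | ∀ i : Fin n, x (i:ℕ) = w i} := by
      intro x hx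
      set w := seg x 0 n with hw
      have hstat : stat L ν lam 0 x n < c := by
        by_contra h
        push_neg at h
        rw [hc] at h
        have hmem : (n : ℕ∞) ∈ {m : ℕ∞ | ∃ k : ℕ, m = k ∧ 1 ≤ k ∧
            -Real.logb 2 α ≤ stat L ν lam 0 x k} := ⟨n, rfl, hn, by linarith⟩
        have hle := sInf_le hmem
        have hxA : Naux L ν lam α 0 x = ⊤ := hx
        rw [show sInf {m : ℕ∞ | ∃ k : ℕ, m = k ∧ 1 ≤ k ∧
            -Real.logb 2 α ≤ stat L ν lam 0 x k} = Naux L ν lam α 0 x from rfl, hxA] at hle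
        exact absurd (top_le_iff.mp hle) (by simp)
      have hwpμ : 0 < wp μ1 w := Finset.prod_pos fun i _ => hμpos _
      have hwpν : 0 < wp ν w := Finset.prod_pos fun i _ => hνpos _
      have huniv := hRu n μ1 ⟨hμpos, hμsum⟩ w
      have hzsum : ∑ i, z (w i) = Real.logb 2 (wp μ1 w) - Real.logb 2 (wp ν w) := by
        unfold wp
        rw [Real.logb_prod _ _ (fun i _ => (hμpos (w i)).ne'),
          Real.logb_prod _ _ (fun i _ => (hνpos (w i)).ne'), ← Finset.sum_sub_distrib]
        exact Finset.sum_congr rfl fun i _ =>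
          Real.logb_div (hμpos _).ne' (hνpos _).ne'
      have hstat' : stat L ν lam 0 x n
          = -(L n w : ℝ) - Real.logb 2 (wp ν w) - n * lam := rfl
      have hbadw : ∑ i, z (w i) ≤ n * lam' := by
        rw [hzsum]
        rw [hstat'] at hstat
        linarith
      refine Set.mem_iUnion₂.mpr ⟨w, Finset.mem_filter.mpr ⟨Finset.mem_univ _, hbadw⟩, ?_⟩
      intro i
      simp [hw, seg]
    calc P1 A ≤ P1 (⋃ w ∈ Bad, {x : ℕ → 𝒳 | ∀ i : Fin n, x (i:ℕ) = w i}) :=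
          measure_mono hsub
      _ ≤ ∑ w ∈ Bad, P1 {x : ℕ → 𝒳 | ∀ i : Fin n, x (i:ℕ) = w i} :=
          measure_biUnion_finset_le _ _
      _ = ∑ w ∈ Bad, ENNReal.ofReal (wp μ1 w) := by
          refine Finset.sum_congr rfl fun w _ => ?_
          rw [hcyl n w, ← ENNReal.ofReal_prod_of_nonneg (fun i _ => (hμpos (w i)).le)]
          rfl
      _ = ENNReal.ofReal (∑ w ∈ Bad, wp μ1 w) :=
          (ENNReal.ofReal_sum_of_nonneg fun w _ =>
            Finset.prod_nonneg fun i _ => (hμpos _).le).symm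
      _ ≤ ENNReal.ofReal (ψ ^ n) :=
          ENNReal.ofReal_le_ofReal
            (chernoff_sum_le μ1 z (fun a => (hμpos a).le) t lam' htpos n)
  have hev : ∀ᶠ n : ℕ in atTop, P1 A ≤ ENNReal.ofReal (ψ ^ n) := by
    have h1 : Tendsto (fun n : ℕ => c / n) atTop (𝓝 0) :=
      tendsto_const_div_atTop_nhds_zero_nat c
    have h2 : Tendsto (fun n : ℕ => c / n + R n / n + lam) atTop (𝓝 lam) := by
      have := (h1.add hRo).add_const lam
      simpa using this
    have h3 : ∀ᶠ n : ℕ in atTop, c / n + R n / n + lam < lam' :=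
      h2.eventually_lt_const hlam'1
    filter_upwards [h3, eventually_ge_atTop 1] with n hlt hn
    apply key n hn
    have hn0 : (0:ℝ) < n := by exact_mod_cast hn
    have hmul := (mul_lt_mul_of_pos_left hlt hn0).le
    have e1 : (n:ℝ) * (c / n) = c := by field_simp
    have e2 : (n:ℝ) * (R n / n) = R n := by field_simp
    rw [mul_add, mul_add, e1, e2] at hmul
    linarith
  have hlim : Tendsto (fun n : ℕ => ENNReal.ofReal (ψ ^ n)) atTop (𝓝 0) := by
    have hp : Tendsto (fun n : ℕ => ψ ^ n) atTop (𝓝 0) :=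
      tendsto_pow_atTop_nhds_zero_of_lt_one hψ0 hψlt
    simpa using ENNReal.tendsto_ofReal hp
  have hPA : P1 A = 0 := le_antisymm (ge_of_tendsto hlim hev) zero_le
  have hset : {x : ℕ → 𝒳 | Naux L ν lam α 0 x < ⊤} = Aᶜ := by
    ext x
    simp [hA, lt_top_iff_ne_top]
  rw [hset]
  refine le_antisymm prob_le_one ?_
  calc (1:ℝ≥0∞) = P1 Set.univ := measure_univ.symm
    _ = P1 (Aᶜ ∪ A) := by rw [Set.compl_union_self]
    _ ≤ P1 Aᶜ + P1 A := measure_union_le _ _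
    _ = P1 Aᶜ := by rw [hPA, add_zero]


end ChangeDetect
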